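/- Let X be an almost discrete space with non-isolated point x₀, and let A ⊆ X be a set not containing x₀ such that every countable subset of A is clopen in X but x₀ lies in the closure of A. Then the characteristic function h of A (h(x) = 1 for x ∈ A, h(x) = 0 otherwise) is discontinuous on X, yet h lies in the closure in ℝ^X of the set F = { f ∈ C(X,ℝ) : there exists a countably infinite S ⊆ A with f = 1 on S and f = 0 on X \ S }. -/
import Mathlib


/-- Let `X` be almost discrete with non-isolated point `x₀`, and `A ⊆ X` a set
with `x₀ ∉ A`, `x₀ ∈ closure A`, every countable subset of which is clopen.
Then the characteristic function `h` of `A` is discontinuous, yet `h` lies in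
the closure in `ℝ^X` of the set `F` of indicator functions of countably
infinite subsets of `A`. -/
theorem indicator_discontinuous_mem_closure {X : Type*} [TopologicalSpace X]
    (x₀ : X) (hni : ¬ IsOpen ({x₀} : Set X))
    (hiso : ∀ x : X, x ≠ x₀ → IsOpen ({x} : Set X))
    (A : Set X) (hx₀A : x₀ ∉ A) (hx₀cl : x₀ ∈ closure A)
    (hclopen : ∀ B ⊆ A, B.Countable → IsClopen B) :
    ¬ Continuous (A.indicator (fun _ => (1 : ℝ))) ∧
      (A.indicator (fun _ => (1 : ℝ))) ∈
        closure {f : X → ℝ | Continuous f ∧ ∃ S ⊆ A, S.Countable ∧ S.Infinite ∧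
          (∀ x ∈ S, f x = 1) ∧ (∀ x ∉ S, f x = 0)} := by
  have hAinf : A.Infinite := by
    intro hfin
    have := (hclopen A le_rfl hfin.countable).isClosed.closure_eq
    rw [this] at hx₀cl
    exact hx₀A hx₀cl
  constructor
  · -- discontinuity at x₀
    intro hc
    have hopen : IsOpen ((A.indicator fun _ => (1 : ℝ)) ⁻¹' Set.Iio (1/2)) :=
      hc.isOpen_preimage _ isOpen_Iio
    have hx₀mem : x₀ ∈ (A.indicator fun _ => (1 : ℝ)) ⁻¹' Set.Iio (1/2) := by
      simp [Set.indicator_of_notMem hx₀A]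
    obtain ⟨y, hy1, hy2⟩ := mem_closure_iff.mp hx₀cl _ hopen hx₀mem
    simp [Set.indicator_of_mem hy2] at hy1
    norm_num at hy1
  · -- closure membership
    rw [mem_closure_iff]
    intro U hU hhU
    obtain ⟨I, u, hu, hsub⟩ := isOpen_pi_iff.mp hU _ hhU
    let e : ℕ ↪ X := (hAinf.natEmbedding A).trans (Function.Embedding.subtype _)
    have he : Set.range e ⊆ A := by
      rintro _ ⟨n, rfl⟩; exact ((hAinf.natEmbedding A) n).2
    set S : Set X := (↑I ∩ A) ∪ Set.range e with hS
    have hSsub : S ⊆ A := Set.union_subset (Set.inter_subset_right) he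
    have hScount : S.Countable := ((I.finite_toSet.inter_of_left A).countable).union
      (Set.countable_range e)
    have hSinf : S.Infinite := Set.Infinite.mono Set.subset_union_right
      (Set.infinite_range_of_injective e.injective)
    have hScl : IsClopen S := hclopen S hSsub hScount
    set f : X → ℝ := S.indicator fun _ => 1 with hf
    have hfc : Continuous f := by
      have : f = (fun b : Bool => if b then (1:ℝ) else 0) ∘ S.boolIndicator := by
        funext x
        by_cases hx : x ∈ S <;>
          simp [hf, Set.indicator, Set.boolIndicator, hx]
      rw [this]
      exact (continuous_of_discreteTopology).comp
        ((continuous_boolIndicator_iff_isClopen S).mpr hScl)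
    refine ⟨f, ?_, hfc, S, hSsub, hScount, hSinf, ?_, ?_⟩
    · apply hsub
      intro i hi
      have : f i = A.indicator (fun _ => (1:ℝ)) i := by
        by_cases hiA : i ∈ A
        · have hiS : i ∈ S := Or.inl ⟨hi, hiA⟩
          simp [hf, Set.indicator_of_mem hiS, Set.indicator_of_mem hiA]
        · have hiS : i ∉ S := fun h => hiA (hSsub h)
          simp [hf, Set.indicator_of_notMem hiS, Set.indicator_of_notMem hiA]
      rw [this]
      exact (hu i hi).2
    · intro x hx; simp [hf, Set.indicator_of_mem hx]
    · intro x hx; simp [hf, Set.indicator_of_notMem hx]
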